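/- Let S ⊆ ℝⁿ be an open convex set, let f : ℝⁿ → ℝ be differentiable, convex and nonnegative on S, and let g : ℝⁿ → ℝ be differentiable, concave and strictly positive on S. Then the ratio z(x) = f(x)/g(x) is pseudoconvex on S, i.e., for all x, x' ∈ S, ⟨∇z(x), x' − x⟩ ≥ 0 implies z(x') ≥ z(x). -/

import Mathlib

/-- Gradient inequality for convex functions: the linear approximation lies below. -/
lemma convexOn_fderiv_le {n : ℕ} {S : Set (Fin n → ℝ)} {φ : (Fin n → ℝ) → ℝ}
    {φ' : (Fin n → ℝ) →L[ℝ] ℝ} (hconv : ConvexOn ℝ S φ) {x x' : Fin n → ℝ}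
    (hx : x ∈ S) (hx' : x' ∈ S) (hd : HasFDerivAt φ φ' x) :
    φ' (x' - x) ≤ φ x' - φ x := by
  set d : Fin n → ℝ := x' - x with hdef
  set h : ℝ → ℝ := fun t => φ (x + t • d) with hh
  have hline : HasDerivAt (fun t : ℝ => x + t • d) d 0 := by
    simpa using ((hasDerivAt_id (0 : ℝ)).smul_const d).const_add x
  have hd0 : HasFDerivAt φ φ' ((fun t : ℝ => x + t • d) 0) := by simpa using hd
  have hderiv : HasDerivAt h (φ' d) 0 := by
    exact hd0.comp_hasDerivAt 0 hline
  have h0 : h 0 = φ x := by simp [hh]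
  have hbound : ∀ t ∈ Set.Ioc (0 : ℝ) 1, slope h 0 t ≤ φ x' - φ x := by
    intro t ht
    have hmem : x + t • d = (1 - t) • x + t • x' := by
      simp only [hdef, smul_sub]; module
    have hle : h t ≤ (1 - t) * φ x + t * φ x' := by
      rw [hh]; simp only
      rw [hmem]
      exact hconv.2 hx hx' (by linarith [ht.2]) (le_of_lt ht.1) (by ring)
    have hsl : slope h 0 t = (h t - h 0) / t := by
      rw [slope_def_field]; ring_nf
    rw [hsl, div_le_iff₀ ht.1, h0]
    nlinarith [ht.1.le]
  have htend : Filter.Tendsto (slope h 0) (nhdsWithin 0 (Set.Ioi 0)) (nhds (φ' d)) :=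
    (hasDerivAt_iff_tendsto_slope.mp hderiv).mono_left
      (nhdsWithin_mono 0 (fun t ht => ne_of_gt ht))
  refine le_of_tendsto htend ?_
  filter_upwards [Ioc_mem_nhdsGT_of_mem (by norm_num : (0:ℝ) ∈ Set.Ico (0:ℝ) 1)] with t ht
  exact hbound t ht

/-- Theorem (Cambini & Martein): if `f` is differentiable, convex and nonnegative on an
open convex set `S`, and `g` is differentiable, concave and strictly positive on `S`,
then `z = f / g` is pseudoconvex on `S`. -/
theorem stmt_1 (n : ℕ) (S : Set (Fin n → ℝ)) (hSopen : IsOpen S) (hSconv : Convex ℝ S)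
    (f g : (Fin n → ℝ) → ℝ)
    (hfdiff : DifferentiableOn ℝ f S) (hfconv : ConvexOn ℝ S f)
    (hfnonneg : ∀ x ∈ S, 0 ≤ f x)
    (hgdiff : DifferentiableOn ℝ g S) (hgconc : ConcaveOn ℝ S g)
    (hgpos : ∀ x ∈ S, 0 < g x) :
    ∀ x ∈ S, ∀ x' ∈ S,
      0 ≤ fderiv ℝ (fun y => f y / g y) x (x' - x) → f x / g x ≤ f x' / g x' := by
  intro x hx x' hx' hgrad
  have hgx := hgpos x hx
  have hgx' := hgpos x' hx'
  have hfx := hfnonneg x hx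
  have hfa : DifferentiableAt ℝ f x := hfdiff.differentiableAt (hSopen.mem_nhds hx)
  have hga : DifferentiableAt ℝ g x := hgdiff.differentiableAt (hSopen.mem_nhds hx)
  have hf' : HasFDerivAt f (fderiv ℝ f x) x := hfa.hasFDerivAt
  have hg' : HasFDerivAt g (fderiv ℝ g x) x := hga.hasFDerivAt
  set v : Fin n → ℝ := x' - x with hv
  -- directional derivative of the quotient along the line t ↦ x + t • v
  have hline : HasDerivAt (fun t : ℝ => x + t • v) v 0 := by
    simpa using ((hasDerivAt_id (0 : ℝ)).smul_const v).const_add x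
  have hza : DifferentiableAt ℝ (fun y => f y / g y) x := by
    have : DifferentiableAt ℝ (fun y => f y * (g y)⁻¹) x :=
      hfa.mul (hga.inv (ne_of_gt hgx))
    simpa [div_eq_mul_inv] using this
  have hz' : HasFDerivAt (fun y => f y / g y) (fderiv ℝ (fun y => f y / g y) x) x :=
    hza.hasFDerivAt
  have hz0 : HasFDerivAt (fun y => f y / g y) (fderiv ℝ (fun y => f y / g y) x)
      ((fun t : ℝ => x + t • v) 0) := by simpa using hz'
  have hcomp1 : HasDerivAt (fun t : ℝ => f (x + t • v) / g (x + t • v))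
      (fderiv ℝ (fun y => f y / g y) x v) 0 := by
    exact hz0.comp_hasDerivAt 0 hline
  have hf0 : HasFDerivAt f (fderiv ℝ f x) ((fun t : ℝ => x + t • v) 0) := by simpa using hf'
  have hg0 : HasFDerivAt g (fderiv ℝ g x) ((fun t : ℝ => x + t • v) 0) := by simpa using hg'
  have hF : HasDerivAt (fun t : ℝ => f (x + t • v)) (fderiv ℝ f x v) 0 := by
    exact hf0.comp_hasDerivAt 0 hline
  have hG : HasDerivAt (fun t : ℝ => g (x + t • v)) (fderiv ℝ g x v) 0 := by
    exact hg0.comp_hasDerivAt 0 hline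
  have hg00 : g (x + (0:ℝ) • v) ≠ 0 := by simpa using ne_of_gt hgx
  have hcomp2 : HasDerivAt (fun t : ℝ => f (x + t • v) / g (x + t • v))
      ((fderiv ℝ f x v * g (x + (0:ℝ) • v) - f (x + (0:ℝ) • v) * fderiv ℝ g x v)
        / g (x + (0:ℝ) • v) ^ 2) 0 := hF.div hG hg00
  have heq : fderiv ℝ (fun y => f y / g y) x v
      = (fderiv ℝ f x v * g x - f x * fderiv ℝ g x v) / g x ^ 2 := by
    have := hcomp1.unique hcomp2
    simpa using this
  rw [heq] at hgrad
  have hgrad' : 0 ≤ fderiv ℝ f x v * g x - f x * fderiv ℝ g x v := by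
    by_contra hcon
    push_neg at hcon
    have : (fderiv ℝ f x v * g x - f x * fderiv ℝ g x v) / g x ^ 2 < 0 :=
      div_neg_of_neg_of_pos (by linarith) (by positivity)
    linarith
  have hfle : fderiv ℝ f x v ≤ f x' - f x := convexOn_fderiv_le hfconv hx hx' hf'
  have hgle : g x' - g x ≤ fderiv ℝ g x v := by
    have hng : HasFDerivAt (-g) (-fderiv ℝ g x) x := hg'.neg
    have h2 := convexOn_fderiv_le hgconc.neg hx hx' hng
    simp only [ContinuousLinearMap.neg_apply, Pi.neg_apply] at h2
    linarith
  rw [div_le_div_iff₀ hgx hgx']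
  nlinarith
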